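/- Fix p ∈ (0,1). For each r ≥ 1 along a sequence with r → ∞, set a = r^{p−1}, and let x^{◦,a} ∈ ℝ^K have all coordinates positive and satisfy χ_{k,k',i}(x^{◦,a}) → 0 as r → ∞ for every pair of edges (k,i), (k',i) ∈ M. Define ν_i^{*,a} = 1 − log(x^{◦,a}_{e_i})/log a for i ∈ I, and x^{*,a}_k = (1/c_k)·a^{1 − Σ_{i∈I} k_i ν_i^{*,a}} for k ∈ K. Then for every k ∈ K, the ratio x^{◦,a}_k / x^{*,a}_k → 1 as r → ∞. -/

import Mathlib

open Finset Filter

/-- `c_k = ∏_i (k_i)!`. -/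
noncomputable def confC {I : Type*} [Fintype I] (k : I → ℕ) : ℝ :=
  ∏ i, (Nat.factorial (k i) : ℝ)

/-- The coordinates of `x` extended by the convention `x_0 = a`. -/
def xeDef {I : Type*} [Fintype I]
    (a : ℝ) (x : (I → ℕ) → ℝ) (m : I → ℕ) : ℝ :=
  if m = 0 then a else x m

/-- `χ_{k,k',i}(x)`, with the convention `x_0 = a`. -/
noncomputable def chiDef {I : Type*} [Fintype I] [DecidableEq I]
    (a : ℝ) (x : (I → ℕ) → ℝ) (k k' : I → ℕ) (i : I) : ℝ :=
  Real.log ((k' i : ℝ) * xeDef a x (k - Pi.single i 1) * xeDef a x k')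
    - Real.log ((k i : ℝ) * xeDef a x k * xeDef a x (k' - Pi.single i 1))

/-- `(k, i)` is an edge. -/
def isEdge {I : Type*} [Fintype I] [DecidableEq I]
    (Kbar : Finset (I → ℕ)) (k : I → ℕ) (i : I) : Prop :=
  k ∈ Kbar.erase 0 ∧ 1 ≤ k i ∧ k - Pi.single i 1 ∈ Kbar

/- ## Auxiliary lemmas -/

lemma confC_pos {I : Type*} [Fintype I] (k : I → ℕ) : 0 < confC k := by
  unfold confC
  exact Finset.prod_pos fun i _ => by exact_mod_cast Nat.factorial_pos _

lemma confC_single {I : Type*} [Fintype I] [DecidableEq I] (i : I) :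
    confC (Pi.single i 1 : I → ℕ) = 1 := by
  unfold confC
  apply Finset.prod_eq_one
  intro j _
  rcases eq_or_ne j i with h | h <;> simp [Pi.single_apply, h]

lemma sub_single_apply_self {I : Type*} [DecidableEq I] (k : I → ℕ) (i : I) :
    (k - Pi.single i 1 : I → ℕ) i = k i - 1 := by simp [Pi.sub_apply]

lemma sub_single_apply_ne {I : Type*} [DecidableEq I] (k : I → ℕ) {i j : I} (h : j ≠ i) :
    (k - Pi.single i 1 : I → ℕ) j = k j := by simp [Pi.sub_apply, Pi.single_apply, h]

lemma confC_factor {I : Type*} [Fintype I] [DecidableEq I] (k : I → ℕ) (i : I) (h : 1 ≤ k i) :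
    confC k = (k i : ℝ) * confC (k - Pi.single i 1) := by
  unfold confC
  rw [← Finset.prod_erase_mul _ _ (Finset.mem_univ i),
      ← Finset.prod_erase_mul _ _ (Finset.mem_univ i)]
  have hprod : (∏ j ∈ Finset.univ.erase i, (((k - Pi.single i 1 : I → ℕ) j).factorial : ℝ))
      = ∏ j ∈ Finset.univ.erase i, ((k j).factorial : ℝ) :=
    Finset.prod_congr rfl fun j hj => by rw [sub_single_apply_ne k (Finset.ne_of_mem_erase hj)]
  rw [hprod, sub_single_apply_self]
  have : (k i).factorial = k i * (k i - 1).factorial := (Nat.mul_factorial_pred (by omega : k i ≠ 0)).symm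
  rw [this]
  push_cast
  ring

lemma single_ne_zero' {I : Type*} [DecidableEq I] (i : I) :
    (Pi.single i 1 : I → ℕ) ≠ 0 := by
  intro h
  have := congrFun h i
  simp at this

lemma sum_single_mul {I : Type*} [Fintype I] [DecidableEq I] (i : I) (f : I → ℝ) :
    ∑ j, ((Pi.single i 1 : I → ℕ) j : ℝ) * f j = f i := by
  rw [Finset.sum_eq_single i]
  · simp
  · intro j _ hj; simp [Pi.single_apply, hj]
  · intro h; exact absurd (Finset.mem_univ i) h

lemma sum_sub_single {I : Type*} [Fintype I] [DecidableEq I] (k : I → ℕ) (i : I)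
    (hki : 1 ≤ k i) (f : I → ℝ) :
    ∑ j, (k j : ℝ) * f j = (∑ j, (((k - Pi.single i 1 : I → ℕ) j : ℕ) : ℝ) * f j) + f i := by
  have h1 : ∀ j, ((k j : ℕ) : ℝ) * f j
      = (((k - Pi.single i 1 : I → ℕ) j : ℕ) : ℝ) * f j
        + ((Pi.single i 1 : I → ℕ) j : ℝ) * f j := by
    intro j
    rcases eq_or_ne j i with rfl | hne
    · rw [sub_single_apply_self]
      have hc : ((k j - 1 : ℕ) : ℝ) = (k j : ℝ) - 1 := by
        rw [Nat.cast_sub hki]; norm_num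
      rw [hc, Pi.single_eq_same]
      push_cast
      ring
    · rw [sub_single_apply_ne k hne]
      simp [Pi.single_apply, hne]
  rw [Finset.sum_congr rfl (fun j _ => h1 j), Finset.sum_add_distrib, sum_single_mul]

/-- The quantity `log(c_k x_k) − log a + ∑_j k_j (log a − log x_{e_j})`. -/
noncomputable def Gfun {I : Type*} [Fintype I] [DecidableEq I]
    (a : ℕ → ℝ) (xo : ℕ → (I → ℕ) → ℝ) (n : ℕ) (k : I → ℕ) : ℝ :=
  Real.log (xo n k) + Real.log (confC k) - Real.log (a n)
    + ∑ j, (k j : ℝ) * (Real.log (a n) - Real.log (xo n (Pi.single j 1)))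

lemma Gfun_single {I : Type*} [Fintype I] [DecidableEq I]
    (a : ℕ → ℝ) (xo : ℕ → (I → ℕ) → ℝ) (n : ℕ) (i : I) :
    Gfun a xo n (Pi.single i 1) = 0 := by
  unfold Gfun
  rw [confC_single, Real.log_one,
    sum_single_mul i (fun j => Real.log (a n) - Real.log (xo n (Pi.single j 1)))]
  ring

/-- claim (eq-ratio-prod-form): along a sequence `r → ∞` with
`a = r^{p−1}`, if `χ_{k,k',i}(x^{◦,a}) → 0` for every pair of edges, then with
`ν_i^{*,a} = 1 − log(x^{◦,a}_{e_i})/log a` and `x^{*,a}_k = (1/c_k)·a^{1−∑_i k_i ν_i^{*,a}}`,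
the ratio `x^{◦,a}_k / x^{*,a}_k → 1` for every `k ∈ K`. -/
theorem ratio_product_form_tendsto_one
    {I : Type*} [Fintype I] [DecidableEq I] [Nonempty I]
    (Kbar : Finset (I → ℕ))
    (h0 : (0 : I → ℕ) ∈ Kbar)
    (hunit : ∀ i : I, Pi.single i 1 ∈ Kbar)
    (hmono : ∀ k ∈ Kbar, ∀ k' : I → ℕ, (∀ i, k' i ≤ k i) → k' ∈ Kbar)
    (p : ℝ) (hp : p ∈ Set.Ioo (0 : ℝ) 1)
    (r : ℕ → ℝ) (hr1 : ∀ n, 1 ≤ r n) (hrtop : Tendsto r atTop atTop)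
    (a : ℕ → ℝ) (ha : ∀ n, a n = r n ^ (p - 1))
    (xo : ℕ → (I → ℕ) → ℝ)
    (hpos : ∀ n, ∀ k ∈ Kbar.erase 0, 0 < xo n k)
    (hchi : ∀ i : I, ∀ k k' : I → ℕ, isEdge Kbar k i → isEdge Kbar k' i →
      Tendsto (fun n => chiDef (a n) (xo n) k k' i) atTop (nhds 0))
    (νs : ℕ → I → ℝ)
    (hν : ∀ n i, νs n i = 1 - Real.log (xo n (Pi.single i 1)) / Real.log (a n))
    (xs : ℕ → (I → ℕ) → ℝ)
    (hxs : ∀ n, ∀ k ∈ Kbar.erase 0,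
      xs n k = (1 / confC k) * a n ^ (1 - ∑ i, (k i : ℝ) * νs n i)) :
    ∀ k ∈ Kbar.erase 0,
      Tendsto (fun n => xo n k / xs n k) atTop (nhds 1) := by
  have hapos : ∀ n, 0 < a n := fun n => by
    rw [ha]; exact Real.rpow_pos_of_pos (lt_of_lt_of_le zero_lt_one (hr1 n)) _
  have hsingle_mem : ∀ i : I, (Pi.single i 1 : I → ℕ) ∈ Kbar.erase 0 := fun i =>
    Finset.mem_erase.2 ⟨single_ne_zero' i, hunit i⟩
  -- Key: Gfun tends to 0 on K, by strong induction on the total size of k.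
  have keyG : ∀ N : ℕ, ∀ k ∈ Kbar.erase 0, (∑ j, k j) ≤ N →
      Tendsto (fun n => Gfun a xo n k) atTop (nhds 0) := by
    intro N
    induction N with
    | zero =>
        intro k hk hs
        exfalso
        have hkne : k ≠ 0 := (Finset.mem_erase.1 hk).1
        obtain ⟨i, hi⟩ := Function.ne_iff.1 hkne
        have : k i ≤ 0 := le_trans (Finset.single_le_sum (f := fun j => k j)
          (fun j _ => Nat.zero_le _) (Finset.mem_univ i)) hs
        simp only [Pi.zero_apply] at hi
        omega
    | succ N ih =>
        intro k hk hs
        have hkne : k ≠ 0 := (Finset.mem_erase.1 hk).1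
        have hkK : k ∈ Kbar := (Finset.mem_erase.1 hk).2
        obtain ⟨i, hi⟩ := Function.ne_iff.1 hkne
        simp only [Pi.zero_apply] at hi
        have hki : 1 ≤ k i := Nat.one_le_iff_ne_zero.2 hi
        by_cases hsub : (k - Pi.single i 1 : I → ℕ) = 0
        · -- base case: k = e_i
          have hkeq : k = Pi.single i 1 := by
            funext j
            have hj := congrFun hsub j
            simp only [Pi.zero_apply] at hj
            rcases eq_or_ne j i with rfl | hne
            · rw [sub_single_apply_self] at hj
              rw [Pi.single_eq_same]
              omega
            · rw [sub_single_apply_ne k hne] at hj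
              rw [Pi.single_eq_of_ne hne]
              exact hj
          subst hkeq
          exact Tendsto.congr (fun n => (Gfun_single a xo n i).symm) tendsto_const_nhds
        · -- inductive step via the edge (k, i) and (e_i, i)
          have hmemsub : (k - Pi.single i 1 : I → ℕ) ∈ Kbar :=
            hmono k hkK _ (fun j => Nat.sub_le _ _)
          have hmemsub' : (k - Pi.single i 1 : I → ℕ) ∈ Kbar.erase 0 :=
            Finset.mem_erase.2 ⟨hsub, hmemsub⟩
          have hsumsingle : (∑ j, (Pi.single i 1 : I → ℕ) j) = 1 := by
            rw [Finset.sum_eq_single i]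
            · simp
            · intro j _ hj; simp [Pi.single_apply, hj]
            · intro h; exact absurd (Finset.mem_univ i) h
          have hsumsub : (∑ j, (k - Pi.single i 1 : I → ℕ) j) ≤ N := by
            have hadd : (∑ j, (k - Pi.single i 1 : I → ℕ) j)
                + (∑ j, (Pi.single i 1 : I → ℕ) j) = ∑ j, k j := by
              rw [← Finset.sum_add_distrib]
              apply Finset.sum_congr rfl
              intro j _
              rcases eq_or_ne j i with rfl | hne
              · rw [sub_single_apply_self, Pi.single_eq_same]; omega
              · rw [sub_single_apply_ne k hne, Pi.single_eq_of_ne hne]; omega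
            rw [hsumsingle] at hadd
            omega
          have hedgek : isEdge Kbar k i := ⟨hk, hki, hmemsub⟩
          have hedgee : isEdge Kbar (Pi.single i 1) i := by
            refine ⟨hsingle_mem i, by simp, ?_⟩
            have : (Pi.single i 1 : I → ℕ) - Pi.single i 1 = 0 := by
              funext j; simp [Pi.sub_apply]
            rw [this]; exact h0
          have hchi0 := hchi i k (Pi.single i 1) hedgek hedgee
          have hrec : ∀ n, Gfun a xo n k
              = Gfun a xo n (k - Pi.single i 1)
                - chiDef (a n) (xo n) k (Pi.single i 1) i := by
            intro n
            have hx_k : 0 < xo n k := hpos n k hk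
            have hx_sub : 0 < xo n (k - Pi.single i 1) := hpos n _ hmemsub'
            have hx_i : 0 < xo n (Pi.single i 1) := hpos n _ (hsingle_mem i)
            have han : 0 < a n := hapos n
            have hki_ne : (k i : ℝ) ≠ 0 := Nat.cast_ne_zero.2 (by omega)
            have hzero : (Pi.single i 1 : I → ℕ) - Pi.single i 1 = 0 := by
              funext j; simp [Pi.sub_apply]
            simp only [chiDef, xeDef, if_neg hsub, if_neg (single_ne_zero' i),
              if_neg hkne, hzero, if_pos rfl, if_true, Pi.single_eq_same, Nat.cast_one, one_mul]
            rw [Real.log_mul (ne_of_gt hx_sub) (ne_of_gt hx_i),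
              Real.log_mul (mul_ne_zero hki_ne (ne_of_gt hx_k)) (ne_of_gt han),
              Real.log_mul hki_ne (ne_of_gt hx_k)]
            unfold Gfun
            rw [confC_factor k i hki,
              Real.log_mul hki_ne (ne_of_gt (confC_pos _)),
              sum_sub_single k i hki
                (fun j => Real.log (a n) - Real.log (xo n (Pi.single j 1)))]
            ring
          have htend := (ih _ hmemsub' hsumsub).sub hchi0
          rw [sub_zero] at htend
          exact Tendsto.congr (fun n => (hrec n).symm) htend
  -- conclude
  intro k hk
  have keyk := keyG (∑ j, k j) k hk le_rfl
  have hev : ∀ᶠ n in atTop, 1 < r n := hrtop.eventually_gt_atTop 1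
  have hfinal : ∀ᶠ n in atTop,
      Real.exp (Gfun a xo n k) = xo n k / xs n k := by
    filter_upwards [hev] with n hn
    have han : 0 < a n := hapos n
    have ha1 : a n < 1 := by
      rw [ha]; exact Real.rpow_lt_one_of_one_lt_of_neg hn (by linarith [hp.2])
    have hlogne : Real.log (a n) ≠ 0 := ne_of_lt (Real.log_neg han ha1)
    have hx_k : 0 < xo n k := hpos n k hk
    have hxs_val := hxs n k hk
    have hxspos : 0 < xs n k := by
      rw [hxs_val]
      have := confC_pos k
      positivity
    have hν_mul : ∀ j : I, νs n j * Real.log (a n)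
        = Real.log (a n) - Real.log (xo n (Pi.single j 1)) := by
      intro j
      rw [hν]
      field_simp
    have hlogxs : Real.log (xs n k)
        = -Real.log (confC k) + Real.log (a n)
          - ∑ j, (k j : ℝ) * (Real.log (a n) - Real.log (xo n (Pi.single j 1))) := by
      rw [hxs_val,
        Real.log_mul (by have := confC_pos k; positivity) (ne_of_gt (Real.rpow_pos_of_pos han _)),
        Real.log_rpow han, one_div, Real.log_inv, sub_mul, one_mul, Finset.sum_mul]
      have : ∀ j : I, (k j : ℝ) * νs n j * Real.log (a n)
          = (k j : ℝ) * (Real.log (a n) - Real.log (xo n (Pi.single j 1))) := by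
        intro j
        rw [mul_assoc, hν_mul j]
      rw [Finset.sum_congr rfl (fun j _ => this j)]
      ring
    have hGeq : Gfun a xo n k = Real.log (xo n k) - Real.log (xs n k) := by
      rw [hlogxs]; unfold Gfun; ring
    rw [hGeq, Real.exp_sub, Real.exp_log hx_k, Real.exp_log hxspos]
  have hexp : Tendsto (fun n => Real.exp (Gfun a xo n k)) atTop (nhds 1) := by
    have := (Real.continuous_exp.tendsto 0).comp keyk
    simpa [Function.comp_def] using this
  exact Tendsto.congr' hfinal hexp
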